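/- arXiv:2110.01118 — 10 statements merged into one kernel-verified Lean document; each statement's English description precedes it below -/
import Mathlib

section
/- Let F be a D₂-saturated family of subsets of [n] and let S be a minimal element of F. Then |F| ≥ |S|. -/
/-- Four sets form an induced copy of the diamond `D₂`:
`W ⊊ X ⊊ Z`, `W ⊊ Y ⊊ Z`, with `X` and `Y` incomparable. -/
def IsDiamond {α : Type*} (W X Y Z : Finset α) : Prop :=
  W ⊂ X ∧ X ⊂ Z ∧ W ⊂ Y ∧ Y ⊂ Z ∧ ¬ X ⊆ Y ∧ ¬ Y ⊆ X

/-- A family contains an induced copy of the diamond. -/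
def ContainsDiamond {α : Type*} (F : Finset (Finset α)) : Prop :=
  ∃ W ∈ F, ∃ X ∈ F, ∃ Y ∈ F, ∃ Z ∈ F, IsDiamond W X Y Z

/-- A family is diamond-free. -/
def DiamondFree {α : Type*} (F : Finset (Finset α)) : Prop :=
  ¬ ContainsDiamond F

/-- A family of subsets of `[n]` is `D₂`-saturated. -/
def Saturated (n : ℕ) (F : Finset (Finset (Fin n))) : Prop :=
  DiamondFree F ∧ ∀ S : Finset (Fin n), S ∉ F → ContainsDiamond (insert S F)

/-- `S` is a minimal element of the family `F`. -/
def MinimalIn {α : Type*} (F : Finset (Finset α)) (S : Finset α) : Prop :=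
  S ∈ F ∧ ∀ T ∈ F, ¬ T ⊂ S

/-- `S` is a maximal element of the family `F`. -/
def MaximalIn {α : Type*} (F : Finset (Finset α)) (S : Finset α) : Prop :=
  S ∈ F ∧ ∀ T ∈ F, ¬ S ⊂ T

/-- `(B, A)` is an `i`-configuration for `F`, `S`, `i`:
`S ⊊ B ⊊ A`, `S ∪ {i} ⊊ A`, and `B` is incomparable with `S ∪ {i}`. -/
def IConfig {n : ℕ} (F : Finset (Finset (Fin n))) (S : Finset (Fin n)) (i : Fin n)
    (B A : Finset (Fin n)) : Prop :=
  B ∈ F ∧ A ∈ F ∧ S ⊂ B ∧ B ⊂ A ∧ insert i S ⊂ A ∧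
    ¬ B ⊆ insert i S ∧ ¬ insert i S ⊆ B

/-- An `i`-configuration `(B, A)` is extremal: `B` has maximal cardinality among all
`i`-configurations, and `A` has minimal cardinality among `i`-configurations of the
form `(B, A')`. -/
def ExtremalIConfig {n : ℕ} (F : Finset (Finset (Fin n))) (S : Finset (Fin n)) (i : Fin n)
    (B A : Finset (Fin n)) : Prop :=
  IConfig F S i B A ∧
    (∀ B' A' : Finset (Fin n), IConfig F S i B' A' → B'.card ≤ B.card) ∧
    (∀ A' : Finset (Fin n), IConfig F S i B A' → A.card ≤ A'.card)

/-- `(X, Y, N)` is an `i`-witness for `B`: `X, Y, N ∈ F`, `N ⊊ B ∪ {i} ⊊ X`,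
`N ⊊ Y ⊊ X`, and `Y` is incomparable with `B ∪ {i}`. -/
def IWitness {n : ℕ} (F : Finset (Finset (Fin n))) (B : Finset (Fin n)) (i : Fin n)
    (X Y N : Finset (Fin n)) : Prop :=
  X ∈ F ∧ Y ∈ F ∧ N ∈ F ∧ N ⊂ insert i B ∧ insert i B ⊂ X ∧ N ⊂ Y ∧ Y ⊂ X ∧
    ¬ Y ⊆ insert i B ∧ ¬ insert i B ⊆ Y

theorem statement_1 {n : ℕ} (F : Finset (Finset (Fin n))) (S : Finset (Fin n))
    (hF : Saturated n F) (hS : MinimalIn F S) :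
    S.card ≤ F.card := by
  classical
  obtain ⟨hfree, hsat⟩ := hF
  obtain ⟨hSF, hmin⟩ := hS
  have key : ∀ i ∈ S, ∃ U ∈ F, S.erase i ⊆ U ∧ i ∉ U := by
    intro i hi
    set T := S.erase i with hTdef
    have hTS : T ⊂ S := Finset.erase_ssubset hi
    have hT : T ∉ F := fun h => hmin _ h hTS
    obtain ⟨W, hW, X, hX, Y, hY, Z, hZ, h1, h2, h3, h4, h5, h6⟩ := hsat _ hT
    -- Z ∈ F
    have hZF : Z ∈ F := by
      rcases Finset.mem_insert.1 hZ with hZT | hZF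
      · exfalso
        have hXT : X ≠ T := by intro h; exact h2.ne (h.trans hZT.symm)
        have hXF : X ∈ F := (Finset.mem_insert.1 hX).resolve_left hXT
        exact hmin _ hXF (h2.trans_eq hZT |>.trans hTS)
      · exact hZF
    have hXF : X ∈ F := by
      rcases Finset.mem_insert.1 hX with hXT | hXF
      · exfalso
        have hWT : W ≠ T := fun h => h1.ne (h.trans hXT.symm)
        have hWF : W ∈ F := (Finset.mem_insert.1 hW).resolve_left hWT
        exact hmin _ hWF ((h1.trans_eq hXT).trans hTS)
      · exact hXF
    have hYF : Y ∈ F := by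
      rcases Finset.mem_insert.1 hY with hYT | hYF
      · exfalso
        have hWT : W ≠ T := fun h => h3.ne (h.trans hYT.symm)
        have hWF : W ∈ F := (Finset.mem_insert.1 hW).resolve_left hWT
        exact hmin _ hWF ((h3.trans_eq hYT).trans hTS)
      · exact hYF
    rcases Finset.mem_insert.1 hW with hWT | hWF
    swap
    · exact absurd ⟨W, hWF, X, hXF, Y, hYF, Z, hZF, h1, h2, h3, h4, h5, h6⟩ hfree
    subst hWT
    -- W = T
    have hnotboth : ¬ (i ∈ X ∧ i ∈ Y) := by
      rintro ⟨hiX, hiY⟩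
      have hSX : S ⊆ X := by
        intro j hj
        by_cases hji : j = i
        · exact hji ▸ hiX
        · exact h1.subset (Finset.mem_erase.2 ⟨hji, hj⟩)
      have hSY : S ⊆ Y := by
        intro j hj
        by_cases hji : j = i
        · exact hji ▸ hiY
        · exact h3.subset (Finset.mem_erase.2 ⟨hji, hj⟩)
      by_cases hXS : X = S
      · exact h5 (hXS ▸ hSY)
      by_cases hYS : Y = S
      · exact h6 (hYS ▸ hSX)
      exact hfree ⟨S, hSF, X, hXF, Y, hYF, Z, hZF,
        ⟨hSX, fun h => hXS (Finset.Subset.antisymm h hSX)⟩, h2,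
        ⟨hSY, fun h => hYS (Finset.Subset.antisymm h hSY)⟩, h4, h5, h6⟩
    by_cases hiX : i ∈ X
    · have hiY : i ∉ Y := fun h => hnotboth ⟨hiX, h⟩
      exact ⟨Y, hYF, h3.subset, hiY⟩
    · exact ⟨X, hXF, h1.subset, hiX⟩
  -- build the injection
  choose! f hfF hfsub hfnot using key
  apply Finset.card_le_card_of_injOn f hfF
  intro i hi j hj hij
  by_contra hne
  have : i ∈ f j := hfsub j hj (Finset.mem_erase.2 ⟨hne, hi⟩)
  rw [← hij] at this
  exact hfnot i hi this
end

section
/- Let F be a D₂-saturated family of subsets of [n] and let S be a nonempty minimal element of F. Then for every i ∈ S there exists B ∈ F with S ∖ {i} ⊆ B and i ∉ B. -/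
theorem statement_2 {n : ℕ} (F : Finset (Finset (Fin n))) (S : Finset (Fin n))
    (hF : Saturated n F) (hS : MinimalIn F S) (hne : S.Nonempty) :
    ∀ i ∈ S, ∃ B ∈ F, S \ {i} ⊆ B ∧ i ∉ B := by
  intro i hi
  set T : Finset (Fin n) := S \ {i} with hT
  have hTS : T ⊂ S := Finset.sdiff_ssubset (by simpa using hi) (Finset.singleton_nonempty i)
  have hTF : T ∉ F := fun h => hS.2 T h hTS
  obtain ⟨W, hW, X, hX, Y, hY, Z, hZ, hd⟩ := hF.2 T hTF
  obtain ⟨hWX, hXZ, hWY, hYZ, hXY, hYX⟩ := hd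
  -- which of W X Y Z equals T
  rcases Finset.mem_insert.1 hW with hWT | hWF
  · -- W = T
    subst hWT
    have hXF : X ∈ F := by
      rcases Finset.mem_insert.1 hX with h | h
      · exact absurd h (by rintro rfl; exact (lt_irrefl _) hWX)
      · exact h
    have hYF : Y ∈ F := by
      rcases Finset.mem_insert.1 hY with h | h
      · exact absurd h (by rintro rfl; exact (lt_irrefl _) hWY)
      · exact h
    have hZF : Z ∈ F := by
      rcases Finset.mem_insert.1 hZ with h | h
      · exact absurd h (by rintro rfl; exact (lt_irrefl _) (hWX.trans hXZ))
      · exact h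
    by_cases hiX : i ∈ X
    · by_cases hiY : i ∈ Y
      · -- both contain i, so both ⊇ S, contradiction with diamond-freeness
        exfalso
        have hSX : S ⊆ X := by
          intro a ha
          by_cases hai : a = i
          · exact hai ▸ hiX
          · exact hWX.1 (Finset.mem_sdiff.2 ⟨ha, by simp [hai]⟩)
        have hSY : S ⊆ Y := by
          intro a ha
          by_cases hai : a = i
          · exact hai ▸ hiY
          · exact hWY.1 (Finset.mem_sdiff.2 ⟨ha, by simp [hai]⟩)
        have hSXs : S ⊂ X := lt_of_le_of_ne hSX (by rintro rfl; exact hXY hSY)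
        have hSYs : S ⊂ Y := lt_of_le_of_ne hSY (by rintro rfl; exact hYX hSX)
        exact hF.1 ⟨S, hS.1, X, hXF, Y, hYF, Z, hZF, hSXs, hXZ, hSYs, hYZ, hXY, hYX⟩
      · exact ⟨Y, hYF, hWY.1, hiY⟩
    · exact ⟨X, hXF, hWX.1, hiX⟩
  · -- W ∈ F; then some other equals T, giving a member of F strictly below S
    exfalso
    have key : ∀ U ∈ F, U ⊂ T → False := fun U hU h =>
      hS.2 U hU (h.trans hTS)
    rcases Finset.mem_insert.1 hX with hXT | hXF
    · exact key W hWF (hXT ▸ hWX)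
    · rcases Finset.mem_insert.1 hY with hYT | hYF
      · exact key W hWF (hYT ▸ hWY)
      · rcases Finset.mem_insert.1 hZ with hZT | hZF
        · exact key X hXF (hZT ▸ hXZ)
        · exact hF.1 ⟨W, hWF, X, hXF, Y, hYF, Z, hZF, hWX, hXZ, hWY, hYZ, hXY, hYX⟩
end

section
/- Claim A: Let F be a D₂-saturated family of subsets of [n], S a minimal element of F, and i, j ∈ [n] ∖ S with i ≠ j. Let (B_i, A_i) be an extremal i-configuration and (B_j, A_j) an extremal j-configuration. Then B_i ∪ {i} ≠ B_j ∪ {j}. -/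
theorem statement_4 {n : ℕ} (F : Finset (Finset (Fin n))) (S : Finset (Fin n))
    (i j : Fin n) (Bi Ai Bj Aj : Finset (Fin n))
    (hF : Saturated n F) (hS : MinimalIn F S)
    (hi : i ∉ S) (hj : j ∉ S) (hij : i ≠ j)
    (hBi : ExtremalIConfig F S i Bi Ai) (hBj : ExtremalIConfig F S j Bj Aj) :
    insert i Bi ≠ insert j Bj := by
  intro heq
  obtain ⟨⟨hBiF, hAiF, hSBi, hBiAi, hiSAi, _, hISBi⟩, _, _⟩ := hBi
  obtain ⟨⟨hBjF, hAjF, hSBj, hBjAj, hjSAj, _, hJSBj⟩, _, _⟩ := hBj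
  have hiBi : i ∉ Bi := fun h => hISBi (Finset.insert_subset h hSBi.1)
  have hjBj : j ∉ Bj := fun h => hJSBj (Finset.insert_subset h hSBj.1)
  have hjBi : j ∈ Bi := by
    have : j ∈ insert i Bi := heq ▸ Finset.mem_insert_self j Bj
    rcases Finset.mem_insert.1 this with h | h
    · exact absurd h.symm hij
    · exact h
  have hiBj : i ∈ Bj := by
    have : i ∈ insert j Bj := heq ▸ Finset.mem_insert_self i Bi
    rcases Finset.mem_insert.1 this with h | h
    · exact absurd h hij
    · exact h
  have hiAi : i ∈ Ai := hiSAi.1 (Finset.mem_insert_self i S)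
  have hjAi : j ∈ Ai := hBiAi.1 hjBi
  have hBjAi : Bj ⊂ Ai := by
    constructor
    · intro x hx
      have hx' : x ∈ insert i Bi := heq ▸ Finset.mem_insert_of_mem hx
      rcases Finset.mem_insert.1 hx' with h | h
      · exact h ▸ hiAi
      · exact hBiAi.1 h
    · exact fun hsub => hjBj (hsub hjAi)
  exact hF.1 ⟨S, hS.1, Bi, hBiF, Bj, hBjF, Ai, hAiF, hSBi, hBiAi, hSBj, hBjAi,
    fun h => hjBj (h hjBi), fun h => hiBi (h hiBj)⟩
end

section
/- Claim B: Let F be a D₂-saturated family of subsets of [n], S a minimal element of F, i ∈ [n] ∖ S, and (B_i, A_i) an extremal i-configuration with B_i ∪ {i} ∉ F. Let (X, Y, N) be an i-witness. Then B_i and N are incomparable (neither N ⊆ B_i nor B_i ⊆ N). -/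
theorem statement_5 {n : ℕ} (F : Finset (Finset (Fin n))) (S : Finset (Fin n))
    (i : Fin n) (Bi Ai X Y N : Finset (Fin n))
    (hF : Saturated n F) (hS : MinimalIn F S) (hi : i ∉ S)
    (hBi : ExtremalIConfig F S i Bi Ai) (hBiF : insert i Bi ∉ F)
    (hW : IWitness F Bi i X Y N) :
    ¬ N ⊆ Bi ∧ ¬ Bi ⊆ N := by
  obtain ⟨hXF, hYF, hNF, hNiB, hiBX, hNY, hYX, hYniB, hiBnY⟩ := hW
  obtain ⟨⟨hBiF', hAiF, hSB, hBA, hiSA, hBniS, hiSnB⟩, hmax, hmin⟩ := hBi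
  have hiBi : i ∉ Bi := fun h => hiSnB (Finset.insert_subset h hSB.1)
  have hiX : i ∈ X := hiBX.1 (Finset.mem_insert_self i Bi)
  have hBiX : Bi ⊆ X := (Finset.subset_insert i Bi).trans hiBX.1
  -- key lemma: Bi ⊆ Y is impossible
  have key : ¬ Bi ⊆ Y := by
    intro hBY
    have hne : Bi ≠ Y := by
      rintro rfl; exact hYniB (Finset.subset_insert i Bi)
    have hiY : i ∉ Y := fun h => hiBnY (Finset.insert_subset h hBY)
    have hconf : IConfig F S i Y X := by
      refine ⟨hYF, hXF, hSB.trans_subset hBY, hYX, ⟨Finset.insert_subset hiX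
        (hSB.1.trans hBiX), ?_⟩, fun h => hBniS (hBY.trans h),
        fun h => hiY (h (Finset.mem_insert_self i S))⟩
      intro h
      exact hBniS (hBiX.trans h)
    have := hmax Y X hconf
    have := Finset.card_lt_card (ssubset_of_subset_of_ne hBY hne)
    omega
  constructor
  · intro hNB
    have hNssB : N ⊂ Bi := by
      refine ssubset_of_subset_of_ne hNB ?_
      rintro rfl
      exact key hNY.1
    have hYnB : ¬ Y ⊆ Bi := fun h => hYniB (h.trans (Finset.subset_insert i Bi))
    exact hF.1 ⟨N, hNF, Bi, hBiF', Y, hYF, X, hXF, hNssB,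
      ssubset_of_subset_of_ne hBiX (by rintro rfl; exact hiBi hiX),
      hNY, hYX, key, hYnB⟩
  · intro hBN
    have hiN : i ∉ N := by
      intro h
      exact hNiB.2 (Finset.insert_subset h hBN)
    have hNB : N ⊆ Bi := by
      intro x hx
      rcases Finset.mem_insert.mp (hNiB.1 hx) with h | h
      · exact absurd (h ▸ hx) hiN
      · exact h
    have : N = Bi := le_antisymm hNB hBN
    exact key (this ▸ hNY.1)
end

section
/- Let F be a D₂-saturated family of subsets of [n], S a minimal element of F, i ∈ [n] ∖ S, and (B_i, A_i) an extremal i-configuration with B_i ∪ {i} ∉ F. Let (X, Y, N) be an i-witness. Then i ∈ N, and S and N are incomparable (neither S ⊆ N nor N ⊆ S); in particular N ≠ S. -/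
theorem statement_6 {n : ℕ} (F : Finset (Finset (Fin n))) (S : Finset (Fin n))
    (i : Fin n) (Bi Ai X Y N : Finset (Fin n))
    (hF : Saturated n F) (hS : MinimalIn F S) (hi : i ∉ S)
    (hBi : ExtremalIConfig F S i Bi Ai) (hBiF : insert i Bi ∉ F)
    (hW : IWitness F Bi i X Y N) :
    i ∈ N ∧ ¬ S ⊆ N ∧ ¬ N ⊆ S := by
  obtain ⟨⟨hBiF', hAiF, hSB, hBA, hSiA, hnBS, hnSB⟩, hmax, hmin⟩ := hBi
  obtain ⟨hXF, hYF, hNF, hNB, hBX, hNY, hYX, hnYB, hnBY⟩ := hW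
  have hiBi : i ∉ Bi := fun h => hnSB (by
    intro x hx
    rcases Finset.mem_insert.1 hx with rfl | hx
    · exact h
    · exact hSB.subset hx)
  have hBiX : Bi ⊂ X := (Finset.ssubset_insert hiBi).trans hBX
  have hiN : i ∈ N := by
    by_contra hiN
    by_cases hBiY : Bi ⊆ Y
    · have hiY : i ∉ Y := fun h => hnBY (Finset.insert_subset h hBiY)
      have hconf : IConfig F S i Y X := by
        refine ⟨hYF, hXF, hSB.trans_subset hBiY, hYX, ?_, ?_, ?_⟩
        · exact (Finset.insert_subset_insert i hSB.subset).trans_ssubset hBX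
        · exact fun h => hnYB (h.trans (Finset.insert_subset_insert i hSB.subset))
        · exact fun h => hiY (h (Finset.mem_insert_self i S))
      have h1 := hmax Y X hconf
      have hne : Bi ≠ Y := fun h => hnYB (h ▸ (Finset.subset_insert i Bi))
      have h2 := Finset.card_lt_card (HasSubset.Subset.ssubset_of_ne hBiY hne)
      omega
    · have hnYBi : ¬ Y ⊆ Bi := fun h => hnYB (h.trans (Finset.subset_insert i Bi))
      have hNBi : N ⊆ Bi := by
        intro x hx
        rcases Finset.mem_insert.1 (hNB.subset hx) with rfl | hx'
        · exact absurd hx hiN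
        · exact hx'
      have hNBi' : N ⊂ Bi := by
        refine HasSubset.Subset.ssubset_of_ne hNBi (fun h => hBiY ?_)
        exact h ▸ hNY.subset
      exact hF.1 ⟨N, hNF, Bi, hBiF', Y, hYF, X, hXF, hNBi', hBiX, hNY, hYX, hBiY, hnYBi⟩
  refine ⟨hiN, ?_, fun h => hi (h hiN)⟩
  intro hSN
  have hSN' : S ⊂ N := HasSubset.Subset.ssubset_of_ne hSN (fun h => hi (h ▸ hiN))
  have hnBiN : ¬ Bi ⊆ N := fun h => hNB.ne (le_antisymm hNB.subset (Finset.insert_subset hiN h))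
  have hnNBi : ¬ N ⊆ Bi := fun h => hiBi (h hiN)
  exact absurd ⟨S, hS.1, Bi, hBiF', N, hNF, X, hXF, hSB, hBiX, hSN', hNB.trans hBX, hnBiN, hnNBi⟩ hF.1
end

section
/- Claim C: Let F be a D₂-saturated family of subsets of [n], S a minimal element of F, and i, j ∈ [n] ∖ S with i ≠ j. Let (B_i, A_i) and (B_j, A_j) be extremal i- and j-configurations with B_i ∪ {i} ∉ F and B_j ∪ {j} ∉ F, and let (X_i, Y_i, N_i) be an i-witness and (X_j, Y_j, N_j) a j-witness. Then it is not the case that both N_i = N_j and B_i = B_j. -/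
theorem statement_7 {n : ℕ} (F : Finset (Finset (Fin n))) (S : Finset (Fin n))
    (i j : Fin n) (Bi Ai Bj Aj Xi Yi Ni Xj Yj Nj : Finset (Fin n))
    (hF : Saturated n F) (hS : MinimalIn F S)
    (hi : i ∉ S) (hj : j ∉ S) (hij : i ≠ j)
    (hBi : ExtremalIConfig F S i Bi Ai) (hBj : ExtremalIConfig F S j Bj Aj)
    (hBiF : insert i Bi ∉ F) (hBjF : insert j Bj ∉ F)
    (hWi : IWitness F Bi i Xi Yi Ni) (hWj : IWitness F Bj j Xj Yj Nj) :
    ¬ (Ni = Nj ∧ Bi = Bj) := by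
  rintro ⟨hN, hB⟩
  subst hN; subst hB
  obtain ⟨hDF, hsat⟩ := hF
  obtain ⟨⟨hBiF', hAiF, hSB, hBA, hSiA, hBnS, hSnB⟩, hmax, hmin⟩ := hBi
  obtain ⟨hXiF, hYiF, hNiF, hNiBi, hBiXi, hNiYi, hYiXi, hYnB, hBnY⟩ := hWi
  obtain ⟨hXjF, hYjF, hNjF, hNjBj, hBjXj, hNjYj, hYjXj, hYnBj, hBjnY⟩ := hWj
  have hiB : i ∉ Bi := fun h => hBiF (by rwa [Finset.insert_eq_self.mpr h])
  have hjB : j ∉ Bi := fun h => hBjF (by rwa [Finset.insert_eq_self.mpr h])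
  have hNB : Ni ⊆ Bi := by
    intro x hx
    have h1 := hNiBi.subset hx
    have h2 := hNjBj.subset hx
    rcases Finset.mem_insert.mp h1 with rfl | h
    · rcases Finset.mem_insert.mp h2 with h' | h'
      · exact absurd h' hij
      · exact h'
    · exact h
  have hBXi : Bi ⊂ Xi := lt_of_le_of_lt (Finset.subset_insert i Bi : Bi ≤ insert i Bi) hBiXi
  have hnYB : ¬ Yi ⊆ Bi := fun h => hYnB (h.trans (Finset.subset_insert i Bi))
  have hnBY : ¬ Bi ⊆ Yi := by
    intro h
    have hBY : Bi ⊂ Yi := Finset.ssubset_def.mpr ⟨h, hnYB⟩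
    have hiY : i ∉ Yi := fun hiY => hBnY (Finset.insert_subset hiY h)
    have hcfg : IConfig F S i Yi Xi := by
      refine ⟨hYiF, hXiF, hSB.trans hBY, hYiXi, ?_, ?_, ?_⟩
      · exact lt_of_le_of_lt (Finset.insert_subset_insert i hSB.subset :
          insert i S ≤ insert i Bi) hBiXi
      · exact fun hc => hBnS (h.trans hc)
      · exact fun hc => hiY (hc (Finset.mem_insert_self i S))
    exact absurd (hmax Yi Xi hcfg) (not_le.mpr (Finset.card_lt_card hBY))
  have hNneB : Ni ≠ Bi := fun h => hnBY (h ▸ hNiYi.subset)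
  have hNssB : Ni ⊂ Bi := lt_of_le_of_ne (hNB : Ni ≤ Bi) hNneB
  exact hDF ⟨Ni, hNiF, Bi, hBiF', Yi, hYiF, Xi, hXiF,
    hNssB, hBXi, hNiYi, hYiXi, hnBY, hnYB⟩
end

section
/- Claim D: Let F be a D₂-saturated family of subsets of [n], S a minimal element of F, and i, j ∈ [n] ∖ S with i ≠ j. Let (B_i, A_i) be an extremal i-configuration and (B_j, A_j) an extremal j-configuration. If B_i ≠ B_j, then A_i ≠ A_j. -/
theorem statement_8 {n : ℕ} (F : Finset (Finset (Fin n))) (S : Finset (Fin n))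
    (i j : Fin n) (Bi Ai Bj Aj : Finset (Fin n))
    (hF : Saturated n F) (hS : MinimalIn F S)
    (hi : i ∉ S) (hj : j ∉ S) (hij : i ≠ j)
    (hBi : ExtremalIConfig F S i Bi Ai) (hBj : ExtremalIConfig F S j Bj Aj)
    (hne : Bi ≠ Bj) :
    Ai ≠ Aj := by
  intro heq
  subst heq
  obtain ⟨⟨hBiF, hAF, hSBi, hBiA, hiSA, hBinc1, hBinc2⟩, hmaxB_i, hminA_i⟩ := hBi
  obtain ⟨⟨hBjF, hAF', hSBj, hBjA, hjSA, hBjnc1, hBjnc2⟩, hmaxB_j, hminA_j⟩ := hBj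
  by_cases hsub : Bi ⊆ Bj
  · have hss : Bi ⊂ Bj := ⟨hsub, fun h => hne (Finset.Subset.antisymm hsub h)⟩
    by_cases hins : insert i S ⊆ Bj
    · have hins' : insert i S ⊂ Bj :=
        ⟨hins, fun h => hBinc1 (hss.subset.trans h)⟩
      have hc : IConfig F S i Bi Bj :=
        ⟨hBiF, hBjF, hSBi, hss, hins', hBinc1, hBinc2⟩
      have h1 := hminA_i Bj hc
      have h2 := Finset.card_lt_card hBjA
      omega
    · have hc : IConfig F S i Bj Ai :=
        ⟨hBjF, hAF, hSBi.trans hss, hBjA, hiSA,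
          fun h => hBinc1 (hsub.trans h), hins⟩
      have h1 := hmaxB_i Bj Ai hc
      have h2 := Finset.card_lt_card hss
      omega
  · by_cases hsub' : Bj ⊆ Bi
    · have hss : Bj ⊂ Bi := ⟨hsub', fun h => hne (Finset.Subset.antisymm h hsub')⟩
      by_cases hins : insert j S ⊆ Bi
      · have hins' : insert j S ⊂ Bi :=
          ⟨hins, fun h => hBjnc1 (hss.subset.trans h)⟩
        have hc : IConfig F S j Bj Bi :=
          ⟨hBjF, hBiF, hSBj, hss, hins', hBjnc1, hBjnc2⟩
        have h1 := hminA_j Bi hc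
        have h2 := Finset.card_lt_card hBiA
        omega
      · have hc : IConfig F S j Bi Ai :=
          ⟨hBiF, hAF, hSBj.trans hss, hBiA, hjSA,
            fun h => hBjnc1 (hsub'.trans h), hins⟩
        have h1 := hmaxB_j Bi Ai hc
        have h2 := Finset.card_lt_card hss
        omega
    · exact hF.1 ⟨S, hS.1, Bi, hBiF, Bj, hBjF, Ai, hAF,
        hSBi, hBiA, hSBj, hBjA, hsub, hsub'⟩
end

section
/- Claim E: Let F be a D₂-saturated family of subsets of [n] with ∅ ∉ F and [n] ∉ F. Then there exist a minimal element P of F and a maximal element R of F such that P and R are incomparable (neither P ⊆ R nor R ⊆ P). -/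
theorem statement_9 {n : ℕ} (F : Finset (Finset (Fin n)))
    (hF : Saturated n F) (hempty : ∅ ∉ F) (hfull : Finset.univ ∉ F) :
    ∃ P R : Finset (Fin n), MinimalIn F P ∧ MaximalIn F R ∧ ¬ P ⊆ R ∧ ¬ R ⊆ P := by
  classical
  by_contra hcon
  push_neg at hcon
  -- Every minimal element is contained in every maximal element.
  have hA : ∀ P R : Finset (Fin n), MinimalIn F P → MaximalIn F R → P ⊆ R := by
    intro P R hP hR
    by_cases hPR : P ⊆ R
    · exact hPR
    · have hRP : R ⊆ P := hcon P R hP hR hPR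
      rcases eq_or_ne R P with h | hne
      · exact absurd (h ▸ subset_rfl) hPR
      · exact absurd (lt_of_le_of_ne hRP hne) (hP.2 R hR.1)
  -- Every member of F contains a minimal element.
  have exmin : ∀ T ∈ F, ∃ m, MinimalIn F m ∧ m ⊆ T := by
    intro T hT
    obtain ⟨m, hm, hmin⟩ := Finset.exists_min_image (F.filter (fun U => U ⊆ T))
      Finset.card ⟨T, Finset.mem_filter.mpr ⟨hT, subset_rfl⟩⟩
    rcases Finset.mem_filter.mp hm with ⟨hmF, hmT⟩
    refine ⟨m, ⟨hmF, ?_⟩, hmT⟩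
    intro U hU hUm
    have hUf : U ∈ F.filter (fun U => U ⊆ T) :=
      Finset.mem_filter.mpr ⟨hU, hUm.subset.trans hmT⟩
    exact absurd (Finset.card_lt_card hUm) (not_lt.mpr (hmin U hUf))
  -- Every member of F is contained in a maximal element.
  have exmax : ∀ T ∈ F, ∃ M, MaximalIn F M ∧ T ⊆ M := by
    intro T hT
    obtain ⟨M, hM, hmax⟩ := Finset.exists_max_image (F.filter (fun U => T ⊆ U))
      Finset.card ⟨T, Finset.mem_filter.mpr ⟨hT, subset_rfl⟩⟩
    rcases Finset.mem_filter.mp hM with ⟨hMF, hTM⟩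
    refine ⟨M, ⟨hMF, ?_⟩, hTM⟩
    intro U hU hMU
    have hUf : U ∈ F.filter (fun U => T ⊆ U) :=
      Finset.mem_filter.mpr ⟨hU, hTM.trans hMU.subset⟩
    exact absurd (Finset.card_lt_card hMU) (not_lt.mpr (hmax U hUf))
  -- The candidate set: points avoided by some maximal element.
  set S0 : Finset (Fin n) :=
    Finset.univ.filter (fun x => ∃ R, MaximalIn F R ∧ x ∉ R) with hS0def
  -- No member of F is a subset of S0.
  have key1 : ∀ T ∈ F, ¬ T ⊆ S0 := by
    intro T hT hsub
    obtain ⟨m, hm, hmT⟩ := exmin T hT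
    have hmne : m.Nonempty := by
      rcases Finset.eq_empty_or_nonempty m with h | h
      · exact absurd (h ▸ hm.1) hempty
      · exact h
    obtain ⟨x, hx⟩ := hmne
    have hxS : x ∈ S0 := hsub (hmT hx)
    obtain ⟨R, hR, hxR⟩ := (Finset.mem_filter.mp hxS).2
    exact hxR (hA m R hm hR hx)
  -- No member of F is a superset of S0.
  have key2 : ∀ T ∈ F, ¬ S0 ⊆ T := by
    intro T hT hsub
    obtain ⟨M, hM, hTM⟩ := exmax T hT
    have hMuniv : M = Finset.univ := by
      apply Finset.eq_univ_iff_forall.mpr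
      intro x
      by_contra hx
      have hxS : x ∈ S0 :=
        Finset.mem_filter.mpr ⟨Finset.mem_univ x, ⟨M, hM, hx⟩⟩
      exact hx (hTM (hsub hxS))
    exact hfull (hMuniv ▸ hM.1)
  -- Hence S0 ∉ F, and inserting it must create a diamond.
  have hS0F : S0 ∉ F := fun h => key1 S0 h subset_rfl
  obtain ⟨W, hW, X, hX, Y, hY, Z, hZ, h1, h2, h3, h4, h5, h6⟩ := hF.2 S0 hS0F
  rcases Finset.mem_insert.mp hW with hW0 | hWF
  · rcases Finset.mem_insert.mp hX with hX0 | hXF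
    · exact h5 (hX0 ▸ hW0 ▸ h3.subset)
    · exact key2 X hXF (hW0 ▸ h1.subset)
  · rcases Finset.mem_insert.mp hX with hX0 | hXF
    · exact key1 W hWF (hX0 ▸ h1.subset)
    · rcases Finset.mem_insert.mp hY with hY0 | hYF
      · exact key1 W hWF (hY0 ▸ h3.subset)
      · rcases Finset.mem_insert.mp hZ with hZ0 | hZF
        · exact key1 X hXF (hZ0 ▸ h2.subset)
        · exact hF.1 ⟨W, hWF, X, hXF, Y, hYF, Z, hZF, h1, h2, h3, h4, h5, h6⟩
end

section
/- Let F be a D₂-saturated family of subsets of [n] with ∅ ∉ F, and let i, j ∈ [n] with i ≠ j. Then there exists T ∈ F with {i, j} ⊆ T. -/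
theorem statement_10 {n : ℕ} (F : Finset (Finset (Fin n)))
    (hF : Saturated n F) (hempty : ∅ ∉ F)
    (i j : Fin n) (hij : i ≠ j) :
    ∃ T ∈ F, ({i, j} : Finset (Fin n)) ⊆ T := by
  by_cases h : ({i, j} : Finset (Fin n)) ∈ F
  · exact ⟨_, h, le_refl _⟩
  obtain ⟨hfree, hsat⟩ := hF
  obtain ⟨W, hW, X, hX, Y, hY, Z, hZ, h1, h2, h3, h4, h5, h6⟩ := hsat _ h
  simp only [Finset.mem_insert] at hW hX hY hZ
  rcases hW with hW | hW
  · subst hW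
    rcases hZ with hZ | hZ
    · exact absurd (hZ ▸ (h1.trans h2)) (ssubset_irrefl _)
    · exact ⟨Z, hZ, (h1.trans h2).subset⟩
  rcases hX with hX | hX
  · subst hX
    rcases hZ with hZ | hZ
    · exact absurd (hZ ▸ h2) (ssubset_irrefl _)
    · exact ⟨Z, hZ, h2.subset⟩
  rcases hY with hY | hY
  · subst hY
    rcases hZ with hZ | hZ
    · exact absurd (hZ ▸ h4) (ssubset_irrefl _)
    · exact ⟨Z, hZ, h4.subset⟩
  rcases hZ with hZ | hZ
  · subst hZ
    have hXc : X.card < 2 := by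
      have := Finset.card_lt_card h2
      rwa [Finset.card_pair hij] at this
    have hWc : W.card = 0 := by
      have := Finset.card_lt_card h1
      omega
    have hWe : W = ∅ := Finset.card_eq_zero.mp hWc
    exact absurd (hWe ▸ hW) hempty
  · exact absurd ⟨W, hW, X, hX, Y, hY, Z, hZ, h1, h2, h3, h4, h5, h6⟩ hfree
end

section
/- Let F be a diamond-free family of subsets of [n] and S a minimal element of F. Then the number of i ∈ [n] ∖ S for which there exist W, X, Y ∈ F with W ⊊ X ⊊ S ∪ {i}, W ⊊ Y ⊊ S ∪ {i}, and X, Y incomparable (i.e., S ∪ {i} is the maximal element of an induced copy of D₂ whose other three elements lie in F) is at most |F|. -/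
theorem statement_14 {n : ℕ} (F : Finset (Finset (Fin n))) (S : Finset (Fin n))
    (hF : DiamondFree F) (hS : MinimalIn F S) :
    {i : Fin n | i ∉ S ∧ ∃ W ∈ F, ∃ X ∈ F, ∃ Y ∈ F,
      IsDiamond W X Y (insert i S)}.ncard ≤ F.card := by
  set T := {i : Fin n | i ∉ S ∧ ∃ W ∈ F, ∃ X ∈ F, ∃ Y ∈ F,
      IsDiamond W X Y (insert i S)} with hT
  have key : ∀ i : Fin n, ∃ Z : Finset (Fin n),
      i ∈ T → Z ∈ F ∧ i ∈ Z ∧ Z ⊆ insert i S := by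
    intro i
    by_cases hi : i ∈ T
    · obtain ⟨hiS, W, hW, X, hX, Y, hY, hWX, hXZ, hWY, hYZ, hXY, hYX⟩ := hi
      refine ⟨X, fun _ => ⟨hX, ?_, hXZ.1⟩⟩
      by_contra hiX
      have hXS : X ⊆ S := by
        intro x hx
        rcases Finset.mem_insert.mp (hXZ.1 hx) with h | h
        · exact absurd (h ▸ hx) hiX
        · exact h
      exact hS.2 W hW (hWX.trans_subset hXS)
    · exact ⟨∅, fun h => absurd h hi⟩
  choose f hf using key
  have hinj : Set.InjOn f T := by
    intro i hi j hj hij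
    obtain ⟨_, hif, hisub⟩ := hf i hi
    obtain ⟨_, hjf, hjsub⟩ := hf j hj
    by_contra hne
    have : j ∈ insert i S := hisub (hij ▸ hjf)
    rcases Finset.mem_insert.mp this with h | h
    · exact hne h.symm
    · exact hj.1 h
  calc T.ncard = (f '' T).ncard := (Set.ncard_image_of_injOn hinj).symm
    _ ≤ (↑F : Set (Finset (Fin n))).ncard := by
        apply Set.ncard_le_ncard _ F.finite_toSet
        rintro _ ⟨i, hi, rfl⟩
        exact (hf i hi).1
    _ = F.card := Set.ncard_coe_finset F
end
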